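/- In the free noncommutative algebra C⟨a,b⟩ modulo the two-sided ideal generated by ab+ba and -a² + b³ + aba, the element a³ equals 0. -/

import Mathlib

open FreeAlgebra

/-- The relations defining the contraction algebra Γ = C⟨a,b⟩/(ab+ba, -a²+b³+aba),
with a = ι ℂ 0 and b = ι ℂ 1. -/
inductive GamRel : FreeAlgebra ℂ (Fin 2) → FreeAlgebra ℂ (Fin 2) → Prop
  | r1 : GamRel (ι ℂ 0 * ι ℂ 1 + ι ℂ 1 * ι ℂ 0) 0
  | r2 : GamRel (-(ι ℂ 0) ^ 2 + (ι ℂ 1) ^ 3 + ι ℂ 0 * ι ℂ 1 * ι ℂ 0) 0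

theorem stmt0 :
    (RingQuot.mkAlgHom ℂ GamRel (ι ℂ 0)) ^ 3 = 0 := by
  set f := RingQuot.mkAlgHom ℂ GamRel with hf
  set a := f (ι ℂ 0) with ha
  set b := f (ι ℂ 1) with hb
  have h1 : a * b + b * a = 0 := by
    have := RingQuot.mkAlgHom_rel ℂ GamRel.r1
    simpa [ha, hb, map_add, map_mul] using this
  have h2 : -a ^ 2 + b ^ 3 + a * b * a = 0 := by
    have := RingQuot.mkAlgHom_rel ℂ GamRel.r2
    simpa [ha, hb, map_add, map_mul, map_pow, map_neg] using this
  have key : (2 : ℂ) • a ^ 3 =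
      a * (a * b + b * a) * a + (a * b + b * a) * b ^ 2
        - b * (a * b + b * a) * b + b ^ 2 * (a * b + b * a)
        - a * (-a ^ 2 + b ^ 3 + a * b * a) - (-a ^ 2 + b ^ 3 + a * b * a) * a := by
    rw [two_smul ℂ]
    noncomm_ring
    simp only [mul_smul_comm, smul_mul_assoc, smul_smul]
    norm_num [two_smul, mul_assoc]
    rw [two_mul]
  rw [h1, h2] at key
  simp only [mul_zero, zero_mul, add_zero, sub_zero, zero_sub, zero_add, neg_zero] at key
  have : a ^ 3 = (2⁻¹ : ℂ) • ((2 : ℂ) • a ^ 3) := by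
    rw [smul_smul]; norm_num
  rw [this, key, smul_zero]
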